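/- (Lemma 2.3, with the binary-search guarantee as a hypothesis.) Let d ≥ 1, n ≥ 1, let ε, ρ > 0 with ερ ≤ 1/2, let r, r' > 0 with r + r' ≥ 1, set L = log(1/(ερ)) and s = ⌈(r+r')² e² log(d/(ερ))⌉. Let p₁,…,pₙ ∈ ℝ^d, q ∈ ℝ^d, and let Q = {i : ‖pᵢ − q‖ ≤ r'·√L}. Let x̂, x* ∈ ℝ^d with ‖x̂ − q‖ ≤ r·√L and ‖x* − q‖ ≤ r·√L, and suppose Σ_{i∈Q} T_s(x̂,pᵢ) ≥ Σ_{i∈Q} T_s(x*,pᵢ) − n·ερ/10. Then Σ_{i∈Q} exp(−‖x̂−pᵢ‖²) ≥ Σ_{i∈Q} exp(−‖x*−pᵢ‖²) − n·ερ/2. -/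

import Mathlib

open scoped BigOperators Classical

set_option maxHeartbeats 1000000


lemma aux_tail (t : ℝ) (ht : 0 ≤ t) (s : ℕ) (hs1 : 1 ≤ s)
    (hts : Real.exp 1 ^ 2 * t ≤ s) :
    |∑ j ∈ Finset.range s, (-t) ^ j / (Nat.factorial j : ℝ) - Real.exp (-t)| ≤
      2 * Real.exp (-(s : ℝ)) := by
  have hsum : Summable (fun j : ℕ => (-t) ^ j / (Nat.factorial j : ℝ)) :=
    Real.summable_pow_div_factorial (-t)
  have hexp : Real.exp (-t) = ∑' j : ℕ, (-t) ^ j / (Nat.factorial j : ℝ) := by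
    rw [Real.exp_eq_exp_ℝ, NormedSpace.exp_eq_tsum_div]
  have hsplit := Summable.sum_add_tsum_nat_add (f := fun j : ℕ => (-t) ^ j / (Nat.factorial j : ℝ)) s hsum
  have hse : 0 < (s : ℝ) := by exact_mod_cast hs1
  have he1 : (2.7:ℝ) < Real.exp 1 := by
    have := Real.exp_one_gt_d9; linarith
  have hts' : t / s ≤ 1 / 2 := by
    have h2 : (2:ℝ) ≤ Real.exp 1 ^ 2 := by nlinarith [he1]
    rw [div_le_div_iff₀ hse (by norm_num)]
    nlinarith
  -- bound the tail
  have hterm : ∀ m : ℕ, t ^ (m + s) / (Nat.factorial (m + s) : ℝ) ≤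
      (t ^ s / Nat.factorial s) * (1/2) ^ m := by
    intro m
    have hfac : (Nat.factorial s : ℝ) * (s:ℝ) ^ m ≤ (Nat.factorial (m + s) : ℝ) := by
      have := Nat.factorial_mul_pow_le_factorial (m := s) (n := m)
      have h2 : Nat.factorial s * s ^ m ≤ Nat.factorial (s + m) :=
        le_trans (Nat.mul_le_mul_left _ (Nat.pow_le_pow_left (Nat.le_succ s) m)) this
      calc (Nat.factorial s : ℝ) * (s:ℝ) ^ m = ((Nat.factorial s * s ^ m : ℕ) : ℝ) := by push_cast; ring
        _ ≤ ((Nat.factorial (s + m) : ℕ) : ℝ) := by exact_mod_cast h2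
        _ = (Nat.factorial (m + s) : ℝ) := by rw [Nat.add_comm]
    have hfs : (0:ℝ) < Nat.factorial s := by positivity
    have hfm : (0:ℝ) < Nat.factorial (m + s) := by positivity
    have hts2 : t ≤ s / 2 := by
      rw [div_le_div_iff₀ hse (by norm_num)] at hts'; linarith
    calc t ^ (m + s) / (Nat.factorial (m + s) : ℝ)
        ≤ t ^ (m + s) / ((Nat.factorial s : ℝ) * (s:ℝ) ^ m) := by
          apply div_le_div_of_nonneg_left (by positivity) (by positivity) hfac
      _ = (t ^ s / Nat.factorial s) * (t / s) ^ m := by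
          rw [pow_add, div_pow]; field_simp
      _ ≤ (t ^ s / Nat.factorial s) * (1/2) ^ m := by
          apply mul_le_mul_of_nonneg_left _ (by positivity)
          exact pow_le_pow_left₀ (by positivity) hts' m
  have hgeo : Summable (fun m : ℕ => (t ^ s / Nat.factorial s) * (1/2) ^ m) :=
    (summable_geometric_of_lt_one (by norm_num) (by norm_num)).mul_left _
  have hsumtail : Summable (fun m : ℕ => (-t) ^ (m + s) / (Nat.factorial (m + s) : ℝ)) :=
    hsum.comp_injective (add_left_injective s)
  have htail : |∑' m : ℕ, (-t) ^ (m + s) / (Nat.factorial (m + s) : ℝ)| ≤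
      2 * (t ^ s / Nat.factorial s) := by
    have habs : Summable (fun m : ℕ => t ^ (m + s) / (Nat.factorial (m + s) : ℝ)) := by
      have := hsumtail.abs
      simpa [abs_div, abs_pow, abs_neg, abs_of_nonneg ht, Nat.abs_cast] using this
    have h1 : |∑' m : ℕ, (-t) ^ (m + s) / (Nat.factorial (m + s) : ℝ)| ≤
        ∑' m : ℕ, t ^ (m + s) / (Nat.factorial (m + s) : ℝ) := by
      have := norm_tsum_le_tsum_norm
        (f := fun m : ℕ => (-t) ^ (m + s) / (Nat.factorial (m + s) : ℝ))
        (by simpa [abs_div, abs_pow, abs_neg, Nat.abs_cast] using hsumtail.abs)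
      simpa [abs_div, abs_pow, abs_neg, abs_of_nonneg ht, Nat.abs_cast] using this
    have h2 : ∑' m : ℕ, t ^ (m + s) / (Nat.factorial (m + s) : ℝ) ≤
        ∑' m : ℕ, (t ^ s / Nat.factorial s) * (1/2) ^ m :=
      Summable.tsum_le_tsum hterm habs hgeo
    have h3 : ∑' m : ℕ, (t ^ s / Nat.factorial s) * (1/2) ^ m
        = (t ^ s / Nat.factorial s) * 2 := by
      rw [tsum_mul_left, tsum_geometric_of_lt_one (by norm_num) (by norm_num)]
      norm_num
    linarith
  -- now t^s/s! ≤ exp(-s)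
  have hfe : ((s:ℝ)) ^ s / Nat.factorial s ≤ Real.exp s := by
    have h := Real.sum_le_exp_of_nonneg (le_of_lt hse) (s+1)
    refine le_trans ?_ h
    exact Finset.single_le_sum (f := fun i => (s:ℝ)^i / Nat.factorial i)
      (fun i _ => by positivity) (Finset.self_mem_range_succ s)
  have hkey : t ^ s / Nat.factorial s ≤ Real.exp (-(s:ℝ)) := by
    have hfs : (0:ℝ) < Nat.factorial s := by positivity
    have hsp : (0:ℝ) < (s:ℝ) ^ s := by positivity
    have he0 : (0:ℝ) < Real.exp 1 := Real.exp_pos 1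
    have hexps : Real.exp (s:ℝ) = Real.exp 1 ^ s := by
      rw [← Real.exp_nat_mul]; norm_num
    have h1 : (s:ℝ) ^ s ≤ Real.exp 1 ^ s * Nat.factorial s := by
      rw [div_le_iff₀ hfs, hexps] at hfe; linarith
    have h2 : t ^ s / Nat.factorial s ≤ (t * Real.exp 1 / s) ^ s := by
      rw [div_pow, mul_pow, div_le_div_iff₀ hfs hsp]
      calc t ^ s * (s:ℝ) ^ s ≤ t ^ s * (Real.exp 1 ^ s * Nat.factorial s) :=
            mul_le_mul_of_nonneg_left h1 (by positivity)
        _ = t ^ s * Real.exp 1 ^ s * Nat.factorial s := by ring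
    have h3 : t * Real.exp 1 / s ≤ Real.exp (-1) := by
      rw [Real.exp_neg, div_le_iff₀ hse, inv_mul_eq_div, le_div_iff₀ he0]
      nlinarith [hts]
    have h4 : (t * Real.exp 1 / s) ^ s ≤ Real.exp (-1) ^ s :=
      pow_le_pow_left₀ (by positivity) h3 s
    have h5 : Real.exp (-1 : ℝ) ^ s = Real.exp (-(s:ℝ)) := by
      rw [← Real.exp_nat_mul]; norm_num
    rw [h5] at h4; linarith
  have heq : ∑ j ∈ Finset.range s, (-t) ^ j / (Nat.factorial j : ℝ) - Real.exp (-t)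
      = -(∑' m : ℕ, (-t) ^ (m + s) / (Nat.factorial (m + s) : ℝ)) := by
    rw [hexp]; linarith [hsplit]
  rw [heq, abs_neg]
  linarith

lemma aux_prod {ι : Type*} [DecidableEq ι] (S : Finset ι) (f g : ι → ℝ) (δ : ℝ) (hδ : 0 ≤ δ)
    (hfg : ∀ i ∈ S, |f i - g i| ≤ δ) (hg : ∀ i ∈ S, |g i| ≤ 1) :
    |∏ i ∈ S, f i - ∏ i ∈ S, g i| ≤ (1 + δ) ^ S.card - 1 := by
  induction S using Finset.induction_on with
  | empty => simp
  | @insert a S ha IH =>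
    have hfa : |f a| ≤ 1 + δ := by
      have h1 := hfg a (Finset.mem_insert_self a S)
      have h2 := hg a (Finset.mem_insert_self a S)
      calc |f a| = |g a + (f a - g a)| := by ring_nf
        _ ≤ |g a| + |f a - g a| := abs_add_le _ _
        _ ≤ 1 + δ := add_le_add h2 h1
    have hgS : |∏ i ∈ S, g i| ≤ 1 := by
      rw [Finset.abs_prod]
      refine Finset.prod_le_one (fun i _ => abs_nonneg _) (fun i hi => hg i (Finset.mem_insert_of_mem hi))
    have IH' := IH (fun i hi => hfg i (Finset.mem_insert_of_mem hi))
      (fun i hi => hg i (Finset.mem_insert_of_mem hi))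
    rw [Finset.prod_insert ha, Finset.prod_insert ha, Finset.card_insert_of_notMem ha]
    have key : f a * ∏ i ∈ S, f i - g a * ∏ i ∈ S, g i
        = f a * (∏ i ∈ S, f i - ∏ i ∈ S, g i) + (f a - g a) * ∏ i ∈ S, g i := by ring
    rw [key]
    have h1 : |f a * (∏ i ∈ S, f i - ∏ i ∈ S, g i)| ≤ (1 + δ) * ((1 + δ) ^ S.card - 1) := by
      rw [abs_mul]
      exact mul_le_mul hfa IH' (abs_nonneg _) (by linarith)
    have h2 : |(f a - g a) * ∏ i ∈ S, g i| ≤ δ := by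
      rw [abs_mul]
      calc |f a - g a| * |∏ i ∈ S, g i| ≤ δ * 1 :=
            mul_le_mul (hfg a (Finset.mem_insert_self a S)) hgS (abs_nonneg _) hδ
        _ = δ := mul_one δ
    calc |f a * (∏ i ∈ S, f i - ∏ i ∈ S, g i) + (f a - g a) * ∏ i ∈ S, g i|
        ≤ |f a * (∏ i ∈ S, f i - ∏ i ∈ S, g i)| + |(f a - g a) * ∏ i ∈ S, g i| := abs_add_le _ _
      _ ≤ (1 + δ) * ((1 + δ) ^ S.card - 1) + δ := add_le_add h1 h2
      _ = (1 + δ) ^ (S.card + 1) - 1 := by ring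

lemma aux_point (d s : ℕ) (δ : ℝ) (hδ : 0 < δ) (hδ1 : (d:ℝ) * δ ≤ 1)
    (x y : EuclideanSpace ℝ (Fin d))
    (hcoord : ∀ k : Fin d, |∑ j ∈ Finset.range s, (-(x k - y k) ^ 2) ^ j / (Nat.factorial j : ℝ)
        - Real.exp (-(x k - y k) ^ 2)| ≤ δ) :
    |∏ k, ∑ j ∈ Finset.range s, (-(x k - y k) ^ 2) ^ j / (Nat.factorial j : ℝ)
        - Real.exp (-‖x - y‖ ^ 2)| ≤ 2 * ((d:ℝ) * δ) := by
  have hsub : ∀ k : Fin d, (x - y) k = x k - y k := fun k => rfl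
  have hnorm : ‖x - y‖ ^ 2 = ∑ k, (x k - y k) ^ 2 := by
    rw [EuclideanSpace.norm_eq, Real.sq_sqrt (by positivity)]
    simp [hsub, sq_abs]
  have hprodg : ∏ k, Real.exp (-(x k - y k) ^ 2) = Real.exp (-‖x - y‖ ^ 2) := by
    rw [← Real.exp_sum, hnorm, Finset.sum_neg_distrib]
  rw [← hprodg]
  have hgb : ∀ k : Fin d, k ∈ (Finset.univ : Finset (Fin d)) →
      |Real.exp (-(x k - y k) ^ 2)| ≤ 1 := by
    intro k _
    rw [abs_of_pos (Real.exp_pos _)]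
    exact Real.exp_le_one_iff.mpr (neg_nonpos.mpr (by positivity))
  have h := aux_prod Finset.univ
    (fun k => ∑ j ∈ Finset.range s, (-(x k - y k) ^ 2) ^ j / (Nat.factorial j : ℝ))
    (fun k => Real.exp (-(x k - y k) ^ 2)) δ hδ.le (fun k _ => hcoord k) hgb
  rw [Finset.card_univ, Fintype.card_fin] at h
  have h2 : (1 + δ) ^ d - 1 ≤ 2 * ((d:ℝ) * δ) := by
    have ha : (1 + δ) ^ d ≤ Real.exp ((d:ℝ) * δ) := by
      calc (1 + δ) ^ d ≤ Real.exp δ ^ d := by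
            apply pow_le_pow_left₀ (by linarith) _ d
            linarith [Real.add_one_le_exp δ]
        _ = Real.exp ((d:ℝ) * δ) := (Real.exp_nat_mul δ d).symm
    have hb : |Real.exp ((d:ℝ) * δ) - 1| ≤ 2 * |(d:ℝ) * δ| :=
      Real.abs_exp_sub_one_le (by rw [abs_of_nonneg (by positivity)]; exact hδ1)
    rw [abs_of_nonneg (show (0:ℝ) ≤ (d:ℝ) * δ by positivity)] at hb
    have hc : Real.exp ((d:ℝ) * δ) - 1 ≤ 2 * ((d:ℝ) * δ) := (abs_le.mp hb).2
    linarith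
  exact le_trans h h2
theorem stmt_12 (d n : ℕ) (hd : 1 ≤ d) (hn : 1 ≤ n)
    (ε ρ : ℝ) (hε : 0 < ε) (hρ : 0 < ρ) (hερ : ε * ρ ≤ 1 / 2)
    (r r' : ℝ) (hr : 0 < r) (hr' : 0 < r') (hrr' : 1 ≤ r + r')
    (L : ℝ) (hL : L = Real.log (1 / (ε * ρ)))
    (s : ℕ) (hs : s = ⌈(r + r') ^ 2 * Real.exp 1 ^ 2 * Real.log (d / (ε * ρ))⌉₊)
    (p : Fin n → EuclideanSpace ℝ (Fin d)) (q : EuclideanSpace ℝ (Fin d))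
    (Q : Finset (Fin n)) (hQ : Q = Finset.univ.filter (fun i => ‖p i - q‖ ≤ r' * Real.sqrt L))
    (xhat xstar : EuclideanSpace ℝ (Fin d))
    (hxhat : ‖xhat - q‖ ≤ r * Real.sqrt L) (hxstar : ‖xstar - q‖ ≤ r * Real.sqrt L)
    (hT : ∑ i ∈ Q, ∏ k, ∑ j ∈ Finset.range s,
            (-(xhat k - p i k) ^ 2) ^ j / (Nat.factorial j : ℝ) ≥
          (∑ i ∈ Q, ∏ k, ∑ j ∈ Finset.range s,
            (-(xstar k - p i k) ^ 2) ^ j / (Nat.factorial j : ℝ)) - n * ε * ρ / 10) :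
    ∑ i ∈ Q, Real.exp (-‖xhat - p i‖ ^ 2) ≥
      (∑ i ∈ Q, Real.exp (-‖xstar - p i‖ ^ 2)) - n * ε * ρ / 2 := by
  have hερ0 : 0 < ε * ρ := mul_pos hε hρ
  have hd0 : (0:ℝ) < d := by exact_mod_cast Nat.lt_of_lt_of_le Nat.zero_lt_one hd
  have hd1 : (1:ℝ) ≤ d := by exact_mod_cast hd
  have h2u : (2:ℝ) ≤ 1 / (ε * ρ) := by rw [le_div_iff₀ hερ0]; linarith
  have hu2 : (2:ℝ) ≤ (d:ℝ) / (ε * ρ) := by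
    refine le_trans h2u ?_
    gcongr
  have hL0 : 0 ≤ L := by rw [hL]; exact Real.log_nonneg (by linarith)
  have hlogpos : 0 < Real.log ((d:ℝ) / (ε * ρ)) :=
    lt_of_lt_of_le (Real.log_pos (by norm_num)) (Real.log_le_log (by norm_num) hu2)
  have hLle : L ≤ Real.log ((d:ℝ) / (ε * ρ)) := by
    rw [hL]
    exact Real.log_le_log (by positivity) (by gcongr)
  have he : (2.7:ℝ) < Real.exp 1 := by have := Real.exp_one_gt_d9; linarith
  have he0 : (0:ℝ) < Real.exp 1 := Real.exp_pos 1
  have hrr0 : (1:ℝ) ≤ (r + r') ^ 2 := by nlinarith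
  have hsge : (r + r') ^ 2 * Real.exp 1 ^ 2 * Real.log ((d:ℝ) / (ε * ρ)) ≤ (s:ℝ) := by
    rw [hs]; exact Nat.le_ceil _
  have hs1 : 1 ≤ s := by
    rw [hs]
    refine Nat.one_le_iff_ne_zero.mpr ?_
    have : 0 < (r + r') ^ 2 * Real.exp 1 ^ 2 * Real.log ((d:ℝ) / (ε * ρ)) := by positivity
    exact Nat.ceil_pos.mpr this |>.ne'
  set δ : ℝ := ε * ρ / (32 * d) with hδdef
  have hδ0 : 0 < δ := by positivity
  have hδd : (d:ℝ) * δ = ε * ρ / 32 := by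
    rw [hδdef]; field_simp
  have hδd1 : (d:ℝ) * δ ≤ 1 := by rw [hδd]; linarith
  -- 2 exp(-s) ≤ δ
  have h2s : 2 * Real.exp (-(s:ℝ)) ≤ δ := by
    have h7 : (7:ℝ) ≤ Real.exp 1 ^ 2 := by nlinarith
    have hs7 : 7 * Real.log ((d:ℝ) / (ε * ρ)) ≤ (s:ℝ) := by
      have ha : (7:ℝ) ≤ (r + r') ^ 2 * Real.exp 1 ^ 2 := by nlinarith
      have hb := mul_le_mul_of_nonneg_right ha hlogpos.le
      linarith
    have hexpbound : Real.exp (-(s:ℝ)) ≤ (((d:ℝ) / (ε * ρ))⁻¹) ^ 7 := by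
      have h1 : Real.exp (-(s:ℝ)) ≤ Real.exp (((7:ℕ):ℝ) * (-Real.log ((d:ℝ) / (ε * ρ)))) := by
        apply Real.exp_le_exp.mpr
        push_cast; linarith
      have h2 : Real.exp (((7:ℕ):ℝ) * (-Real.log ((d:ℝ) / (ε * ρ))))
          = (((d:ℝ) / (ε * ρ))⁻¹) ^ 7 := by
        rw [Real.exp_nat_mul, Real.exp_neg, Real.exp_log (by positivity)]
      rw [h2] at h1
      exact h1
    have hui0 : (0:ℝ) < ((d:ℝ) / (ε * ρ))⁻¹ := by positivity
    have hui : ((d:ℝ) / (ε * ρ))⁻¹ ≤ 1 / 2 := by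
      rw [inv_le_iff_one_le_mul₀ (by positivity)]
      linarith
    have h6 : (((d:ℝ) / (ε * ρ))⁻¹) ^ 6 ≤ (1/2 : ℝ) ^ 6 :=
      pow_le_pow_left₀ hui0.le hui 6
    have hval : ((d:ℝ) / (ε * ρ))⁻¹ = ε * ρ / d := by
      rw [inv_div]
    have h7' : (((d:ℝ) / (ε * ρ))⁻¹) ^ 7 ≤ (1/64 : ℝ) * (ε * ρ / d) := by
      calc (((d:ℝ) / (ε * ρ))⁻¹) ^ 7
          = (((d:ℝ) / (ε * ρ))⁻¹) ^ 6 * ((d:ℝ) / (ε * ρ))⁻¹ := by ring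
        _ ≤ (1/2 : ℝ) ^ 6 * ((d:ℝ) / (ε * ρ))⁻¹ :=
            mul_le_mul_of_nonneg_right h6 hui0.le
        _ = (1/64 : ℝ) * (ε * ρ / d) := by rw [hval]; norm_num
    have : Real.exp (-(s:ℝ)) ≤ (1/64 : ℝ) * (ε * ρ / d) := le_trans hexpbound h7'
    rw [hδdef]
    have heq : ε * ρ / (32 * (d:ℝ)) = 2 * ((1/64 : ℝ) * (ε * ρ / d)) := by ring
    rw [heq]
    linarith
  -- per point bound
  have key : ∀ x : EuclideanSpace ℝ (Fin d), ‖x - q‖ ≤ r * Real.sqrt L → ∀ i ∈ Q,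
      |∏ k, ∑ j ∈ Finset.range s, (-(x k - p i k) ^ 2) ^ j / (Nat.factorial j : ℝ)
        - Real.exp (-‖x - p i‖ ^ 2)| ≤ ε * ρ / 16 := by
    intro x hx i hi
    have hpi : ‖p i - q‖ ≤ r' * Real.sqrt L := by
      rw [hQ] at hi; exact (Finset.mem_filter.mp hi).2
    have hxp : ‖x - p i‖ ≤ (r + r') * Real.sqrt L := by
      have hdecomp : x - p i = (x - q) - (p i - q) := by abel
      calc ‖x - p i‖ = ‖(x - q) - (p i - q)‖ := by rw [← hdecomp]
        _ ≤ ‖x - q‖ + ‖p i - q‖ := norm_sub_le _ _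
        _ ≤ r * Real.sqrt L + r' * Real.sqrt L := add_le_add hx hpi
        _ = (r + r') * Real.sqrt L := by ring
    have hxp2 : ‖x - p i‖ ^ 2 ≤ (r + r') ^ 2 * L := by
      have h := pow_le_pow_left₀ (norm_nonneg _) hxp 2
      rwa [mul_pow, Real.sq_sqrt hL0] at h
    have hsub : ∀ k : Fin d, (x - p i) k = x k - p i k := fun k => rfl
    have hsumsq : ∑ k, (x k - p i k) ^ 2 = ‖x - p i‖ ^ 2 := by
      rw [EuclideanSpace.norm_eq, Real.sq_sqrt (by positivity)]
      simp [hsub, sq_abs]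
    have hcoord : ∀ k : Fin d,
        |∑ j ∈ Finset.range s, (-(x k - p i k) ^ 2) ^ j / (Nat.factorial j : ℝ)
          - Real.exp (-(x k - p i k) ^ 2)| ≤ δ := by
      intro k
      have ht0 : (0:ℝ) ≤ (x k - p i k) ^ 2 := sq_nonneg _
      have htle : (x k - p i k) ^ 2 ≤ (r + r') ^ 2 * L := by
        refine le_trans ?_ (le_trans (le_of_eq hsumsq) hxp2)
        exact Finset.single_le_sum (f := fun m : Fin d => (x m - p i m) ^ 2)
          (fun m _ => sq_nonneg _) (Finset.mem_univ k)
      have hts : Real.exp 1 ^ 2 * ((x k - p i k) ^ 2) ≤ (s:ℝ) := by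
        have hLlog : (r + r') ^ 2 * L ≤ (r + r') ^ 2 * Real.log ((d:ℝ) / (ε * ρ)) := by
          gcongr
        nlinarith [Real.exp_pos 1, sq_nonneg (Real.exp 1)]
      exact le_trans (aux_tail _ ht0 s hs1 hts) h2s
    have := aux_point d s δ hδ0 hδd1 x (p i) hcoord
    calc |∏ k, ∑ j ∈ Finset.range s, (-(x k - p i k) ^ 2) ^ j / (Nat.factorial j : ℝ)
          - Real.exp (-‖x - p i‖ ^ 2)| ≤ 2 * ((d:ℝ) * δ) := this
      _ = ε * ρ / 16 := by rw [hδd]; ring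
  -- sum up
  have hcard : (Q.card : ℝ) ≤ n := by
    have := Finset.card_le_univ Q
    simp only [Finset.card_univ, Fintype.card_fin] at this
    exact_mod_cast this
  have hbound : ∀ x : EuclideanSpace ℝ (Fin d), ‖x - q‖ ≤ r * Real.sqrt L →
      |∑ i ∈ Q, ∏ k, ∑ j ∈ Finset.range s,
          (-(x k - p i k) ^ 2) ^ j / (Nat.factorial j : ℝ)
        - ∑ i ∈ Q, Real.exp (-‖x - p i‖ ^ 2)| ≤ n * ε * ρ / 16 := by
    intro x hx
    rw [← Finset.sum_sub_distrib]
    calc |∑ i ∈ Q, (∏ k, ∑ j ∈ Finset.range s,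
            (-(x k - p i k) ^ 2) ^ j / (Nat.factorial j : ℝ)
          - Real.exp (-‖x - p i‖ ^ 2))|
        ≤ ∑ i ∈ Q, |∏ k, ∑ j ∈ Finset.range s,
            (-(x k - p i k) ^ 2) ^ j / (Nat.factorial j : ℝ)
          - Real.exp (-‖x - p i‖ ^ 2)| := Finset.abs_sum_le_sum_abs _ _
      _ ≤ ∑ _i ∈ Q, ε * ρ / 16 := Finset.sum_le_sum (fun i hi => key x hx i hi)
      _ = Q.card * (ε * ρ / 16) := by rw [Finset.sum_const, nsmul_eq_mul]
      _ ≤ n * (ε * ρ / 16) := by gcongr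
      _ = n * ε * ρ / 16 := by ring
  have h1 := abs_le.mp (hbound xhat hxhat)
  have h2 := abs_le.mp (hbound xstar hxstar)
  linarith [h1.1, h1.2, h2.1, h2.2, hT]
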